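/- arXiv:2601.21034 — 4 statements merged into one kernel-verified Lean document; each statement's English description precedes it below -/
import Mathlib

section
/- For any positive integers a, b, c, the Dedekind sum satisfies s(ac, bc) = s(a, b), where s(b,a) := Σ_{k=1}^{a} ((kb/a))·((k/a)). -/
open Classical

open Finset

/-- The sawtooth function `((x))`. -/
noncomputable def dp (x : ℝ) : ℝ := if ∃ m : ℤ, (m : ℝ) = x then 0 else Int.fract x - 1/2

/-- The Dedekind sum `s(b, a)` (no coprimality condition). -/
noncomputable def ded (b a : ℕ) : ℝ :=
  ∑ k ∈ Finset.Icc 1 a, dp ((k : ℝ) * b / a) * dp ((k : ℝ) / a)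

lemma dp_intCast (n : ℤ) : dp (n : ℝ) = 0 := by
  simp [dp]

lemma dp_zero : dp 0 = 0 := by
  simpa using dp_intCast 0

lemma dp_int_add (x : ℝ) (n : ℤ) : dp (x + n) = dp x := by
  by_cases h : ∃ m : ℤ, (m : ℝ) = x
  · obtain ⟨m, rfl⟩ := h
    rw [show ((m:ℝ) + n) = ((m + n : ℤ) : ℝ) by push_cast; ring, dp_intCast, dp_intCast]
  · have h' : ¬ ∃ m : ℤ, (m : ℝ) = x + n := by
      rintro ⟨m, hm⟩
      exact h ⟨m - n, by push_cast; linarith⟩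
    simp [dp, h, h', Int.fract_add_intCast]

lemma dp_of_Ioo {x : ℝ} (h0 : 0 < x) (h1 : x < 1) : dp x = x - 1/2 := by
  have hne : ¬ ∃ m : ℤ, (m : ℝ) = x := by
    rintro ⟨m, rfl⟩
    have h0' : (0:ℤ) < m := by exact_mod_cast h0
    have h1' : m < 1 := by exact_mod_cast h1
    omega
  rw [dp, if_neg hne, Int.fract_eq_self.2 ⟨le_of_lt h0, h1⟩]

lemma gauss (n : ℕ) : ∑ j ∈ range n, ((j:ℝ)) = n * (n - 1) / 2 := by
  induction n with
  | zero => simp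
  | succ n ih => rw [Finset.sum_range_succ, ih]; push_cast; ring

lemma gauss' (n : ℕ) : ∑ j ∈ range n, ((j:ℝ) + 1) = n * (n + 1) / 2 := by
  induction n with
  | zero => simp
  | succ n ih => rw [Finset.sum_range_succ, ih]; push_cast; ring

lemma sum_dp_base (c : ℕ) (hc : 0 < c) (x : ℝ) (h0 : 0 ≤ x) (h1 : x < 1 / c) :
    ∑ j ∈ range c, dp (x + j / c) = dp (c * x) := by
  have hc' : (0:ℝ) < c := by exact_mod_cast hc
  rcases eq_or_lt_of_le h0 with h | hx
  · -- x = 0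
    subst h
    rw [mul_zero, dp_zero]
    obtain ⟨n, rfl⟩ := Nat.exists_eq_succ_of_ne_zero hc.ne'
    rw [Finset.sum_range_succ']
    have key : ∀ j ∈ range n, dp ((0:ℝ) + (((j+1 : ℕ)):ℝ) / ((n+1 : ℕ):ℝ))
        = ((j:ℝ)+1) / ((n:ℝ)+1) - 1/2 := by
      intro j hj
      have hjn : (j:ℝ) < n := by exact_mod_cast Finset.mem_range.1 hj
      have harg : (0:ℝ) + (((j+1 : ℕ)):ℝ) / ((n+1 : ℕ):ℝ) = ((j:ℝ)+1) / ((n:ℝ)+1) := by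
        push_cast; ring
      rw [harg]
      apply dp_of_Ioo
      · positivity
      · rw [div_lt_one (by positivity)]; linarith
    rw [Finset.sum_congr rfl key]
    have h2 : (0:ℝ) + ((0:ℕ):ℝ) / ((n+1:ℕ):ℝ) = ((0:ℤ):ℝ) := by push_cast; ring
    rw [h2, dp_intCast]
    rw [Finset.sum_sub_distrib, ← Finset.sum_div, gauss']
    simp only [Finset.sum_const, Finset.card_range, nsmul_eq_mul]
    field_simp
    ring
  · -- 0 < x
    have key : ∀ j ∈ range c, dp (x + (j:ℝ) / c) = x + (j:ℝ)/c - 1/2 := by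
      intro j hj
      have hjc : (j:ℝ) ≤ (c:ℝ) - 1 := by
        have h3 : (j:ℝ) + 1 ≤ c := by exact_mod_cast Finset.mem_range.1 hj
        linarith
      apply dp_of_Ioo
      · positivity
      · have h4 : (j:ℝ)/c ≤ ((c:ℝ)-1)/c := by gcongr
        have h5 : ((c:ℝ)-1)/c + 1/c = 1 := by field_simp; ring
        linarith
    rw [Finset.sum_congr rfl key]
    have hcx0 : 0 < (c:ℝ) * x := by positivity
    have hcx1 : (c:ℝ) * x < 1 := by
      have := (lt_div_iff₀ hc').1 h1
      linarith [mul_comm x (c:ℝ) ▸ this]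
    rw [dp_of_Ioo hcx0 hcx1]
    rw [Finset.sum_sub_distrib, Finset.sum_add_distrib, ← Finset.sum_div, gauss]
    simp only [Finset.sum_const, Finset.card_range, nsmul_eq_mul]
    field_simp
    ring

lemma sum_dp_shift (c : ℕ) (hc : 0 < c) (x y : ℝ) (h : y = x + 1/c) :
    ∑ j ∈ range c, dp (y + j / c) = ∑ j ∈ range c, dp (x + j / c) := by
  have hc' : ((c:ℝ)) ≠ 0 := by positivity
  subst h
  have key : ∀ j ∈ range c, dp (x + 1/c + (j:ℝ)/c) = dp (x + (((j+1:ℕ)):ℝ)/c) := by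
    intro j _
    congr 1
    push_cast
    ring
  rw [Finset.sum_congr rfl key]
  have h1 : ∑ j ∈ range (c+1), dp (x + (j:ℝ)/c)
      = (∑ j ∈ range c, dp (x + (((j+1:ℕ)):ℝ)/c)) + dp (x + ((0:ℕ):ℝ)/c) :=
    Finset.sum_range_succ' _ _
  have h2 : ∑ j ∈ range (c+1), dp (x + (j:ℝ)/c)
      = (∑ j ∈ range c, dp (x + (j:ℝ)/c)) + dp (x + ((c:ℕ):ℝ)/c) :=
    Finset.sum_range_succ _ _
  have h3 : dp (x + ((c:ℕ):ℝ)/c) = dp (x + ((0:ℕ):ℝ)/c) := by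
    rw [show x + ((c:ℕ):ℝ)/c = (x + ((0:ℕ):ℝ)/c) + ((1:ℤ):ℝ) by
      push_cast; field_simp; ring, dp_int_add]
  linarith [h1, h2, h3]

lemma sum_dp_shift_int (c : ℕ) (hc : 0 < c) (m : ℤ) :
    ∀ x : ℝ, ∑ j ∈ range c, dp (x + (m:ℝ)/c + j / c) = ∑ j ∈ range c, dp (x + j / c) := by
  induction m using Int.induction_on with
  | zero => intro x; simp
  | succ n ih =>
    intro x
    have step := sum_dp_shift c hc (x + (n:ℝ)/c) (x + ((n:ℤ)+1:ℤ)/c) (by push_cast; ring)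
    have e1 : ∀ j ∈ range c, dp (x + ((n:ℤ)+1:ℤ)/c + (j:ℝ)/c)
        = dp (x + (((n+1:ℤ)):ℝ)/c + (j:ℝ)/c) := by intro j _; norm_num
    rw [Finset.sum_congr rfl fun j hj => (e1 j hj).symm]
    have e2 : ∀ j ∈ range c, dp (x + (n:ℝ)/c + (j:ℝ)/c)
        = dp (x + (((n:ℤ)):ℝ)/c + (j:ℝ)/c) := by intro j _; norm_num
    rw [step, Finset.sum_congr rfl e2, ih x]
  | pred n ih =>
    intro x
    have step := sum_dp_shift c hc (x + ((-(n:ℤ)-1 : ℤ):ℝ)/c) (x + ((-(n:ℤ) : ℤ):ℝ)/c)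
      (by push_cast; ring)
    have goal_eq : ∑ j ∈ range c, dp (x + (((-(n:ℤ)-1:ℤ)):ℝ)/c + (j:ℝ)/c)
        = ∑ j ∈ range c, dp (x + (j:ℝ)/c) := by
      rw [← step]
      exact ih x
    have e3 : ∀ j ∈ range c, dp (x + ((-((n:ℤ)+1) : ℤ):ℝ)/c + (j:ℝ)/c)
        = dp (x + (((-(n:ℤ)-1:ℤ)):ℝ)/c + (j:ℝ)/c) := by
      intro j _; congr 2; push_cast; ring
    exact goal_eq

lemma dp_dist (c : ℕ) (hc : 0 < c) (x : ℝ) :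
    ∑ j ∈ range c, dp (x + j / c) = dp (c * x) := by
  have hc' : (0:ℝ) < c := by exact_mod_cast hc
  set m : ℤ := ⌊(c:ℝ) * x⌋ with hm
  set y : ℝ := Int.fract ((c:ℝ)*x) / c with hy
  have hfract : Int.fract ((c:ℝ)*x) = (c:ℝ)*x - m := rfl
  have hxy : x = y + (m:ℝ)/c := by
    rw [hy, hfract]; field_simp; ring
  have h0 : 0 ≤ y := div_nonneg (Int.fract_nonneg _) hc'.le
  have h1 : y < 1/c := by
    rw [hy, div_lt_div_iff₀ hc' hc']
    have := Int.fract_lt_one ((c:ℝ)*x)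
    nlinarith [Int.fract_nonneg ((c:ℝ)*x)]
  have hcx : (c:ℝ) * x = (c:ℝ) * y + (m:ℝ) := by
    rw [hy, hfract]; field_simp; ring
  calc ∑ j ∈ range c, dp (x + j / c)
      = ∑ j ∈ range c, dp (y + (m:ℝ)/c + j / c) := by
        apply Finset.sum_congr rfl; intro j _; rw [← hxy]
    _ = ∑ j ∈ range c, dp (y + j / c) := sum_dp_shift_int c hc m y
    _ = dp (c * y) := sum_dp_base c hc y h0 h1
    _ = dp (c * x) := by rw [hcx, dp_int_add]

lemma sum_range_mul {M : Type*} [AddCommMonoid M] (f : ℕ → M) (b c : ℕ) :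
    ∑ i ∈ range (b * c), f i = ∑ j ∈ range c, ∑ r ∈ range b, f (j * b + r) := by
  induction c with
  | zero => simp
  | succ c ih =>
    rw [Nat.mul_succ, Finset.sum_range_add, ih, Finset.sum_range_succ]
    congr 1
    apply Finset.sum_congr rfl
    intro r _
    congr 1
    ring

theorem ded_mul_right (a b c : ℕ) (ha : 0 < a) (hb : 0 < b) (hc : 0 < c) :
    ded (a * c) (b * c) = ded a b := by
  have hb' : (0:ℝ) < b := by exact_mod_cast hb
  have hc' : (0:ℝ) < c := by exact_mod_cast hc
  unfold ded
  rw [← Finset.Ico_add_one_right_eq_Icc, Finset.sum_Ico_eq_sum_range,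
      ← Finset.Ico_add_one_right_eq_Icc, Finset.sum_Ico_eq_sum_range]
  simp only [Nat.add_sub_cancel]
  rw [sum_range_mul (fun i => dp (((1 + i : ℕ):ℝ) * ((a*c : ℕ):ℝ) / ((b*c:ℕ):ℝ))
        * dp (((1 + i : ℕ):ℝ) / ((b*c:ℕ):ℝ))) b c]
  rw [Finset.sum_comm]
  apply Finset.sum_congr rfl
  intro r hr
  have key : ∀ j ∈ range c,
      dp (((1 + (j * b + r) : ℕ):ℝ) * ((a*c : ℕ):ℝ) / ((b*c:ℕ):ℝ))
        * dp (((1 + (j * b + r) : ℕ):ℝ) / ((b*c:ℕ):ℝ))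
      = dp (((1 + r : ℕ):ℝ) * (a:ℝ) / (b:ℝ))
        * dp (((1 + r:ℕ):ℝ) / ((b:ℝ)*(c:ℝ)) + (j:ℝ)/(c:ℝ)) := by
    intro j _
    congr 1
    · rw [show ((1 + (j * b + r) : ℕ):ℝ) * ((a*c : ℕ):ℝ) / ((b*c:ℕ):ℝ)
          = ((1 + r : ℕ):ℝ) * (a:ℝ) / (b:ℝ) + (((j * a : ℕ) : ℤ):ℝ) by
        push_cast; field_simp; ring]
      rw [dp_int_add]
    · congr 1
      push_cast
      field_simp
      ring
  rw [Finset.sum_congr rfl key, ← Finset.mul_sum]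
  rw [dp_dist c hc (((1 + r:ℕ):ℝ) / ((b:ℝ)*(c:ℝ)))]
  congr 2
  field_simp
end

section
/- For any integer n > 1, Σ_{d₁|n} Σ_{d₂|n} μ(d₁)μ(d₂)·(d₁d₂/n²)·gcd(n/d₁, n/d₂)² = 2^{ω(n)}·φ(n)/n. -/
open ArithmeticFunction Finset

noncomputable def muR : ArithmeticFunction ℝ :=
  ((moebius : ArithmeticFunction ℤ) : ArithmeticFunction ℝ)
noncomputable def idR : ArithmeticFunction ℝ :=
  ((ArithmeticFunction.id : ArithmeticFunction ℕ) : ArithmeticFunction ℝ)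
noncomputable def JR : ArithmeticFunction ℝ := muR * (idR.pmul idR)
noncomputable def gR : ArithmeticFunction ℝ :=
  (muR.pmul idR) * ((zeta : ArithmeticFunction ℕ) : ArithmeticFunction ℝ)
noncomputable def fR : ArithmeticFunction ℝ := JR * (gR.pmul gR)

lemma muR_apply (d : ℕ) : muR d = (moebius d : ℝ) := rfl
lemma idR_apply (d : ℕ) : idR d = (d : ℝ) := rfl

lemma sum_JR {m : ℕ} (hm : m ≠ 0) : ∑ e ∈ m.divisors, JR e = (m : ℝ) ^ 2 := by
  have h : (JR * ((zeta : ArithmeticFunction ℕ) : ArithmeticFunction ℝ) : ArithmeticFunction ℝ) = idR.pmul idR := by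
    rw [JR, mul_assoc, mul_comm (idR.pmul idR), ← mul_assoc,
      show ((muR * ((zeta : ArithmeticFunction ℕ) : ArithmeticFunction ℝ) : ArithmeticFunction ℝ)) = 1 from coe_moebius_mul_coe_zeta, one_mul]
  have h2 : (JR * ((zeta : ArithmeticFunction ℕ) : ArithmeticFunction ℝ) : ArithmeticFunction ℝ) m = ∑ e ∈ m.divisors, JR e := coe_mul_zeta_apply
  rw [← h2, h, pmul_apply, idR_apply, pow_two]

lemma gR_apply (m : ℕ) : gR m = ∑ d ∈ m.divisors, (moebius d : ℝ) * d := by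
  rw [gR, coe_mul_zeta_apply]
  simp only [pmul_apply, muR_apply, idR_apply]

lemma gR_prime_pow {p : ℕ} (hp : p.Prime) : ∀ {j : ℕ}, j ≠ 0 → gR (p ^ j) = 1 - p := by
  have key : ∀ j : ℕ, gR (p ^ j) = if j = 0 then 1 else 1 - (p : ℝ) := by
    intro j
    induction j with
    | zero => simp [gR_apply]
    | succ k ih =>
      rw [gR_apply, Nat.sum_divisors_prime_pow hp, Finset.sum_range_succ,
        ← Nat.sum_divisors_prime_pow (f := fun d => (moebius d : ℝ) * d) hp, ← gR_apply, ih]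
      rcases Nat.eq_zero_or_pos k with hk | hk
      · subst hk
        rw [zero_add, pow_one, moebius_apply_prime hp]
        push_cast
        simp
        try ring
      · rw [if_neg hk.ne', if_neg (Nat.succ_ne_zero k),
          moebius_apply_prime_pow hp (Nat.succ_ne_zero k), if_neg (by omega)]
        push_cast; ring
  intro j hj
  rw [key, if_neg hj]

lemma sum_JR_range {p : ℕ} (hp : p.Prime) (a : ℕ) :
    ∑ i ∈ Finset.range (a + 1), JR (p ^ i) = ((p : ℝ) ^ a) ^ 2 := by
  rw [← Nat.sum_divisors_prime_pow hp, sum_JR (pow_ne_zero a hp.pos.ne')]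
  push_cast; ring

lemma fR_prime_pow {p : ℕ} (hp : p.Prime) (b : ℕ) :
    fR (p ^ (b + 1)) = 2 * (Nat.totient (p ^ (b + 1)) : ℝ) * ((p : ℝ) ^ (b + 1)) := by
  have hG1 : gR.pmul gR 1 = 1 := by
    rw [pmul_apply, gR_apply]
    simp
  have hJ : JR (p ^ (b + 1)) = ((p : ℝ) ^ (b + 1)) ^ 2 - ((p : ℝ) ^ b) ^ 2 := by
    have h1 := sum_JR_range hp (b + 1)
    rw [Finset.sum_range_succ, sum_JR_range hp b] at h1
    linarith
  rw [fR, mul_apply, Nat.sum_divisorsAntidiagonal (fun x y => JR x * (gR.pmul gR) y),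
    Nat.sum_divisors_prime_pow hp, Finset.sum_range_succ,
    Nat.div_self (pow_pos hp.pos _), hG1, mul_one, hJ]
  have hrest : ∀ i ∈ Finset.range (b + 1),
      JR (p ^ i) * (gR.pmul gR) (p ^ (b + 1) / p ^ i)
        = JR (p ^ i) * (1 - (p : ℝ)) ^ 2 := by
    intro i hi
    rw [Finset.mem_range] at hi
    rw [Nat.pow_div (by omega) hp.pos, pmul_apply, gR_prime_pow hp (by omega), pow_two]
  rw [Finset.sum_congr rfl hrest, ← Finset.sum_mul, sum_JR_range hp b,
    Nat.totient_prime_pow_succ hp]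
  have hc : ((p - 1 : ℕ) : ℝ) = (p : ℝ) - 1 := by
    have := hp.one_le
    push_cast [this]
    ring
  push_cast [hc]
  ring

lemma fR_mult : fR.IsMultiplicative := by
  have h1 : muR.IsMultiplicative := isMultiplicative_moebius.intCast
  have h2 : idR.IsMultiplicative := isMultiplicative_id.natCast
  have hz : (((zeta : ArithmeticFunction ℕ)) : ArithmeticFunction ℝ).IsMultiplicative :=
    isMultiplicative_zeta.natCast
  exact (h1.mul (h2.pmul h2)).mul (((h1.pmul h2).mul hz).pmul ((h1.pmul h2).mul hz))

lemma fR_eq {n : ℕ} (hn : n ≠ 0) :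
    fR n = 2 ^ n.primeFactors.card * (Nat.totient n : ℝ) * n := by
  rw [fR_mult.multiplicative_factorization fR hn]
  have htot : (Nat.totient n : ℝ) = ∏ p ∈ n.factorization.support, (Nat.totient (p ^ n.factorization p) : ℝ) := by
    rw [Nat.multiplicative_factorization Nat.totient (fun x y h => Nat.totient_mul h)
      Nat.totient_one hn, Finsupp.prod, Nat.cast_prod]
  have hid : (n : ℝ) = ∏ p ∈ n.factorization.support, (p : ℝ) ^ n.factorization p := by
    conv_lhs => rw [← Nat.factorization_prod_pow_eq_self hn]
    rw [Finsupp.prod, Nat.cast_prod]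
    exact Finset.prod_congr rfl fun p _ => by push_cast; ring
  have hcard : (2 : ℝ) ^ n.primeFactors.card = ∏ _p ∈ n.factorization.support, (2 : ℝ) := by
    rw [Finset.prod_const, Nat.support_factorization]
  rw [htot, hid, hcard, Finsupp.prod, ← Finset.prod_mul_distrib, ← Finset.prod_mul_distrib]
  refine Finset.prod_congr rfl fun p hp => ?_
  have hprime : p.Prime := Nat.prime_of_mem_primeFactors (by
    rwa [← Nat.support_factorization])
  have hk : n.factorization p ≠ 0 := Finsupp.mem_support_iff.mp hp
  obtain ⟨b, hb⟩ := Nat.exists_eq_succ_of_ne_zero hk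
  rw [hb, fR_prime_pow hprime b]

lemma fR_eq_sum {n : ℕ} (hn : n ≠ 0) :
    fR n = ∑ d₁ ∈ n.divisors, ∑ d₂ ∈ n.divisors,
      (moebius d₁ : ℝ) * d₁ * ((moebius d₂ : ℝ) * d₂) * (Nat.gcd (n / d₁) (n / d₂) : ℝ) ^ 2 := by
  have push : ∀ (c : Prop) [Decidable c] (s : Finset ℕ) (f : ℕ → ℝ),
      (if c then ∑ x ∈ s, f x else 0) = ∑ x ∈ s, if c then f x else 0 := by
    intro c _ s f
    split <;> simp
  have step1 : fR n = ∑ e ∈ n.divisors, ∑ d₁ ∈ n.divisors, ∑ d₂ ∈ n.divisors,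
      (if d₁ ∣ n / e ∧ d₂ ∣ n / e then
        JR e * ((moebius d₁ : ℝ) * d₁ * ((moebius d₂ : ℝ) * d₂)) else 0) := by
    rw [fR, mul_apply, Nat.sum_divisorsAntidiagonal (fun x y => JR x * (gR.pmul gR) y)]
    refine Finset.sum_congr rfl fun e he => ?_
    have hde : n / e ∣ n := Nat.div_dvd_of_dvd (Nat.dvd_of_mem_divisors he)
    rw [pmul_apply, gR_apply, Finset.sum_mul_sum]
    simp only [Finset.mul_sum]
    rw [← Nat.divisors_filter_dvd_of_dvd hn hde]
    simp only [Finset.sum_filter]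
    simp only [push]
    simp only [← ite_and]
  rw [step1, Finset.sum_comm]
  refine Finset.sum_congr rfl fun d₁ h₁ => ?_
  rw [Finset.sum_comm]
  refine Finset.sum_congr rfl fun d₂ h₂ => ?_
  have hd₁ := Nat.dvd_of_mem_divisors h₁
  have hd₂ := Nat.dvd_of_mem_divisors h₂
  have hnpos : 0 < n := Nat.pos_of_ne_zero hn
  have swap_dvd : ∀ d e : ℕ, d ∣ n → e ∣ n → (d ∣ n / e ↔ e ∣ n / d) := by
    intro d e hd he
    rw [Nat.dvd_div_iff_mul_dvd he, Nat.dvd_div_iff_mul_dvd hd, mul_comm]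
  have hGdvd : Nat.gcd (n / d₁) (n / d₂) ∣ n :=
    (Nat.gcd_dvd_left _ _).trans (Nat.div_dvd_of_dvd hd₁)
  have hGne : Nat.gcd (n / d₁) (n / d₂) ≠ 0 :=
    (Nat.gcd_pos_of_pos_left _ (Nat.div_pos (Nat.le_of_dvd hnpos hd₁)
      (Nat.pos_of_mem_divisors h₁))).ne'
  have hcond : ∀ e ∈ n.divisors,
      ((d₁ ∣ n / e ∧ d₂ ∣ n / e) ↔ e ∣ Nat.gcd (n / d₁) (n / d₂)) := by
    intro e he
    have hedvd := Nat.dvd_of_mem_divisors he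
    constructor
    · rintro ⟨ha, hb⟩
      exact Nat.dvd_gcd ((swap_dvd d₁ e hd₁ hedvd).mp ha) ((swap_dvd d₂ e hd₂ hedvd).mp hb)
    · intro h
      exact ⟨(swap_dvd d₁ e hd₁ hedvd).mpr (h.trans (Nat.gcd_dvd_left _ _)),
        (swap_dvd d₂ e hd₂ hedvd).mpr (h.trans (Nat.gcd_dvd_right _ _))⟩
  calc (∑ e ∈ n.divisors, if d₁ ∣ n / e ∧ d₂ ∣ n / e then
          JR e * ((moebius d₁ : ℝ) * d₁ * ((moebius d₂ : ℝ) * d₂)) else 0)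
      = ∑ e ∈ n.divisors, (if e ∣ Nat.gcd (n / d₁) (n / d₂) then
          JR e * ((moebius d₁ : ℝ) * d₁ * ((moebius d₂ : ℝ) * d₂)) else 0) :=
        Finset.sum_congr rfl fun e he => if_congr (hcond e he) rfl rfl
    _ = ∑ e ∈ (Nat.gcd (n / d₁) (n / d₂)).divisors,
          JR e * ((moebius d₁ : ℝ) * d₁ * ((moebius d₂ : ℝ) * d₂)) := by
        rw [← Finset.sum_filter, Nat.divisors_filter_dvd_of_dvd hn hGdvd]
    _ = (∑ e ∈ (Nat.gcd (n / d₁) (n / d₂)).divisors, JR e) *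
          ((moebius d₁ : ℝ) * d₁ * ((moebius d₂ : ℝ) * d₂)) := by
        rw [Finset.sum_mul]
    _ = (moebius d₁ : ℝ) * d₁ * ((moebius d₂ : ℝ) * d₂) *
          (Nat.gcd (n / d₁) (n / d₂) : ℝ) ^ 2 := by
        rw [sum_JR hGne]; ring

theorem delange_sum (n : ℕ) (hn : 1 < n) :
    ∑ d₁ ∈ n.divisors, ∑ d₂ ∈ n.divisors,
        (moebius d₁ : ℝ) * (moebius d₂ : ℝ) * ((d₁ : ℝ) * d₂ / (n : ℝ) ^ 2) *
          (Nat.gcd (n / d₁) (n / d₂) : ℝ) ^ 2 =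
      2 ^ (n.primeFactors.card) * (Nat.totient n : ℝ) / n := by
  have hn0 : n ≠ 0 := by omega
  have hnR : (n : ℝ) ≠ 0 := Nat.cast_ne_zero.mpr hn0
  have key : (∑ d₁ ∈ n.divisors, ∑ d₂ ∈ n.divisors,
      (moebius d₁ : ℝ) * (moebius d₂ : ℝ) * ((d₁ : ℝ) * d₂ / (n : ℝ) ^ 2) *
        (Nat.gcd (n / d₁) (n / d₂) : ℝ) ^ 2) = fR n / (n : ℝ) ^ 2 := by
    rw [fR_eq_sum hn0, Finset.sum_div]
    refine Finset.sum_congr rfl fun d₁ _ => ?_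
    rw [Finset.sum_div]
    refine Finset.sum_congr rfl fun d₂ _ => ?_
    ring
  rw [key, fR_eq hn0, pow_two, mul_div_mul_right _ _ hnR]
end

section
/- For any integer n > 1 with square-free part m (the product of the distinct primes dividing n), Σ_{a < n, gcd(a,n)=1} a² = (φ(n)/6)·(2n² + m·(-1)^{ω(m)}). -/
open Finset

private lemma sumsq (N : ℕ) : ∑ j ∈ Finset.range N, (j : ℝ) ^ 2
    = (N : ℝ) * ((N : ℝ) - 1) * (2 * (N : ℝ) - 1) / 6 := by
  induction N with
  | zero => simp
  | succ k ih =>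
    rw [Finset.sum_range_succ, ih]
    push_cast
    ring

private lemma moebius_divisor_sum (k : ℕ) :
    ∑ d ∈ k.divisors, ((ArithmeticFunction.moebius d : ℤ) : ℝ)
      = if k = 1 then 1 else 0 := by
  have h := congrArg (fun f : ArithmeticFunction ℤ => f k)
    ArithmeticFunction.moebius_mul_coe_zeta
  simp only [ArithmeticFunction.coe_mul_zeta_apply, ArithmeticFunction.one_apply] at h
  rw [← Int.cast_sum, h]
  split <;> simp

private lemma squarefree_prod_primes {s : Finset ℕ} (hs : ∀ p ∈ s, p.Prime) :
    Squarefree (∏ p ∈ s, p) := by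
  induction s using Finset.cons_induction with
  | empty => simp only [Finset.prod_empty]; exact squarefree_one
  | cons p s hp ih =>
    rw [Finset.prod_cons]
    have hpp : p.Prime := hs p (Finset.mem_cons_self _ _)
    have hrest : Squarefree (∏ q ∈ s, q) := ih fun q hq => hs q (Finset.mem_cons_of_mem hq)
    rw [Nat.squarefree_mul_iff]
    refine ⟨(Nat.Prime.coprime_iff_not_dvd hpp).2 fun hdvd => ?_, hpp.squarefree, hrest⟩
    obtain ⟨q, hq, hpq⟩ := hpp.prime.exists_mem_finset_dvd hdvd
    exact hp (((Nat.prime_dvd_prime_iff_eq hpp (hs q (Finset.mem_cons_of_mem hq))).1 hpq) ▸ hq)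

theorem sum_sq_coprime (n : ℕ) (hn : 1 < n) (m : ℕ) (hm : m = ∏ p ∈ n.primeFactors, p) :
    ∑ a ∈ (Finset.range n).filter (fun a => Nat.Coprime a n), (a : ℝ) ^ 2 =
      (Nat.totient n : ℝ) / 6 * (2 * (n : ℝ) ^ 2 + (m : ℝ) * (-1) ^ m.primeFactors.card) := by
  have hn0 : n ≠ 0 := by omega
  set μ : ℕ → ℝ := fun d => ((ArithmeticFunction.moebius d : ℤ) : ℝ) with hμ
  -- Step 1: Möbius indicator
  have step1 : ∑ a ∈ (Finset.range n).filter (fun a => Nat.Coprime a n), (a : ℝ) ^ 2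
      = ∑ a ∈ Finset.range n, ∑ d ∈ n.divisors,
          (if d ∣ a then μ d * (a : ℝ) ^ 2 else 0) := by
    rw [Finset.sum_filter]
    refine Finset.sum_congr rfl fun a _ => ?_
    have hg : Nat.gcd a n ≠ 0 := fun h => hn0 (Nat.eq_zero_of_gcd_eq_zero_right h)
    have hfilter : n.divisors.filter (fun d => d ∣ a) = (Nat.gcd a n).divisors := by
      ext d
      simp only [Finset.mem_filter, Nat.mem_divisors, Nat.dvd_gcd_iff, hn0, hg,
        ne_eq, not_false_eq_true, and_true]
      tauto
    rw [← Finset.sum_filter, hfilter, ← Finset.sum_mul, moebius_divisor_sum]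
    unfold Nat.Coprime
    split_ifs <;> simp
  -- Step 2: swap the sums
  have step2 : ∑ a ∈ Finset.range n, ∑ d ∈ n.divisors,
        (if d ∣ a then μ d * (a : ℝ) ^ 2 else 0)
      = ∑ d ∈ n.divisors, μ d * ∑ a ∈ (Finset.range n).filter (fun a => d ∣ a),
          (a : ℝ) ^ 2 := by
    rw [Finset.sum_comm]
    refine Finset.sum_congr rfl fun d _ => ?_
    rw [← Finset.sum_filter, Finset.mul_sum]
  -- Step 3: evaluate the inner sum
  have step3 : ∀ d ∈ n.divisors, ∑ a ∈ (Finset.range n).filter (fun a => d ∣ a), (a : ℝ) ^ 2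
      = (d : ℝ) ^ 2 * ((n / d : ℕ) * ((n / d : ℕ) - 1) * (2 * (n / d : ℕ) - 1) / 6) := by
    intro d hd
    obtain ⟨hdvd, -⟩ := Nat.mem_divisors.mp hd
    have hd0 : 0 < d := Nat.pos_of_dvd_of_pos hdvd (by omega)
    have himg : (Finset.range n).filter (fun a => d ∣ a)
        = (Finset.range (n / d)).image (fun j => d * j) := by
      ext a
      simp only [Finset.mem_filter, Finset.mem_range, Finset.mem_image]
      constructor
      · rintro ⟨hlt, k, rfl⟩
        exact ⟨k, by
          have := Nat.div_lt_div_of_lt_of_dvd hdvd hlt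
          rwa [Nat.mul_div_cancel_left _ hd0] at this, rfl⟩
      · rintro ⟨j, hj, rfl⟩
        exact ⟨by calc d * j < d * (n / d) := by exact mul_lt_mul_of_pos_left hj hd0
                  _ = n := Nat.mul_div_cancel' hdvd, ⟨j, rfl⟩⟩
    rw [himg, Finset.sum_image (fun x _ y _ h => Nat.eq_of_mul_eq_mul_left hd0 h)]
    have : ∀ j ∈ Finset.range (n / d), ((d * j : ℕ) : ℝ) ^ 2 = (d : ℝ) ^ 2 * (j : ℝ) ^ 2 := by
      intro j _; push_cast; ring
    rw [Finset.sum_congr rfl this, ← Finset.mul_sum, sumsq]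
  -- Step 4: rewrite each term
  have step4 : ∑ d ∈ n.divisors, μ d *
        ((d : ℝ) ^ 2 * ((n / d : ℕ) * ((n / d : ℕ) - 1) * (2 * (n / d : ℕ) - 1) / 6))
      = (2 * (n : ℝ) ^ 2 * ∑ d ∈ n.divisors, μ d * ((n / d : ℕ) : ℝ)
          - 3 * (n : ℝ) ^ 2 * ∑ d ∈ n.divisors, μ d
          + (n : ℝ) * ∑ d ∈ n.divisors, μ d * (d : ℝ)) / 6 := by
    rw [Finset.mul_sum, Finset.mul_sum, Finset.mul_sum, ← Finset.sum_sub_distrib,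
      ← Finset.sum_add_distrib, Finset.sum_div]
    refine Finset.sum_congr rfl fun d hd => ?_
    obtain ⟨hdvd, -⟩ := Nat.mem_divisors.mp hd
    have hdN : (d : ℝ) * ((n / d : ℕ) : ℝ) = (n : ℝ) := by
      rw [← Nat.cast_mul, Nat.mul_div_cancel' hdvd]
    rw [← hdN]
    ring
  -- Sum A : totient
  have hA : ∑ d ∈ n.divisors, μ d * ((n / d : ℕ) : ℝ) = (Nat.totient n : ℝ) := by
    have hinv := (ArithmeticFunction.sum_eq_iff_sum_mul_moebius_eq
      (R := ℝ) (f := fun x => (Nat.totient x : ℝ)) (g := fun x => (x : ℝ))).mp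
      (fun x hx => by exact_mod_cast congrArg (Nat.cast (R := ℝ)) (Nat.sum_totient x))
      n (by omega)
    rw [← hinv, Nat.sum_divisorsAntidiagonal (fun d e => μ d * (e : ℝ))]
  -- Sum B : zero
  have hB : ∑ d ∈ n.divisors, μ d = 0 := by
    simp only [hμ]
    rw [moebius_divisor_sum, if_neg (by omega)]
  -- Sum C : product over primes
  have hmsq : Squarefree m := by
    rw [hm]; exact squarefree_prod_primes fun p hp => Nat.prime_of_mem_primeFactors hp
  have hmfac : m.primeFactors = n.primeFactors := by
    rw [hm]; exact Nat.primeFactors_prod fun p hp => Nat.prime_of_mem_primeFactors hp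
  have hmdvd : m ∣ n := hm ▸ Nat.prod_primeFactors_dvd n
  have hC : ∑ d ∈ n.divisors, μ d * (d : ℝ)
      = ∏ p ∈ m.primeFactors, (1 - (p : ℝ)) := by
    have hid := (ArithmeticFunction.IsMultiplicative.prodPrimeFactors_one_sub_of_squarefree
      (R := ℝ) ((ArithmeticFunction.id : ArithmeticFunction ℕ) : ArithmeticFunction ℝ)
      (ArithmeticFunction.isMultiplicative_id.natCast) hmsq)
    simp only [ArithmeticFunction.natCoe_apply, ArithmeticFunction.id_apply] at hid
    rw [hid]
    symm
    apply Finset.sum_subset (Nat.divisors_subset_of_dvd hn0 hmdvd)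
    intro d hdn hdm
    obtain ⟨hdvd, -⟩ := Nat.mem_divisors.mp hdn
    by_cases hsq : Squarefree d
    · exfalso
      apply hdm
      rw [Nat.mem_divisors]
      refine ⟨?_, hmsq.ne_zero⟩
      calc d = ∏ p ∈ d.primeFactors, p := (Nat.prod_primeFactors_of_squarefree hsq).symm
        _ ∣ ∏ p ∈ n.primeFactors, p :=
          Finset.prod_dvd_prod_of_subset _ _ _ (Nat.primeFactors_mono hdvd hn0)
        _ = m := hm.symm
    · simp [hμ, ArithmeticFunction.moebius_eq_zero_of_not_squarefree hsq]
  -- product identity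
  have hprod : (1 : ℝ) * ∏ p ∈ m.primeFactors, (1 - (p : ℝ))
      = (-1) ^ m.primeFactors.card * ∏ p ∈ m.primeFactors, ((p : ℝ) - 1) := by
    rw [← Finset.prod_const (-1 : ℝ), ← Finset.prod_mul_distrib]
    rw [one_mul]
    exact Finset.prod_congr rfl fun p _ => by ring
  -- totient * m = n * prod (p - 1)
  have htot : (Nat.totient n : ℝ) * (m : ℝ) = (n : ℝ) * ∏ p ∈ m.primeFactors, ((p : ℝ) - 1) := by
    have h := Nat.totient_mul_prod_primeFactors n
    have hcast : ((n * ∏ p ∈ n.primeFactors, (p - 1) : ℕ) : ℝ)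
        = (n : ℝ) * ∏ p ∈ n.primeFactors, ((p : ℝ) - 1) := by
      push_cast
      congr 1
      refine Finset.prod_congr rfl fun p hp => ?_
      have h1 : 1 ≤ p := (Nat.prime_of_mem_primeFactors hp).one_lt.le
      rw [Nat.cast_sub h1, Nat.cast_one]
    rw [hmfac, ← hcast, ← h]
    push_cast [hm]
    ring
  -- Put everything together
  rw [step1, step2, Finset.sum_congr rfl fun d hd => by rw [step3 d hd], step4, hA, hB, hC]
  have : (n : ℝ) * ∏ p ∈ m.primeFactors, (1 - (p : ℝ))
      = (Nat.totient n : ℝ) * (m : ℝ) * (-1) ^ m.primeFactors.card := by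
    have h2 : ∏ p ∈ m.primeFactors, (1 - (p : ℝ))
        = (-1) ^ m.primeFactors.card * ∏ p ∈ m.primeFactors, ((p : ℝ) - 1) := by
      simpa using hprod
    rw [h2, ← mul_assoc, mul_comm ((n : ℝ)) _, mul_assoc, ← htot]
    ring
  rw [mul_zero]
  linarith [this]
end

section
/- For any integer n > 1, Σ_{a ∈ U(n)} ν_n(a)·a = -n·φ(n)/4 + n·Σ_{d₁|n} Σ_{d₂|n} μ(d₁)μ(d₂)·s(n/d₁, n/d₂), where U(n) is the set of positive integers less than n coprime to n, ν_n(a) := Σ_{d|n} μ(d){a/d}, and s(b,a) := Σ_{k=1}^{a} ((kb/a))((k/a)) is the Dedekind sum. -/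
open Classical

open ArithmeticFunction Finset

section Helpers

theorem musum (m : ℕ) : ∑ d ∈ m.divisors, (moebius d : ℝ) = if m = 1 then 1 else 0 := by
  have h1 : ((moebius * (zeta : ArithmeticFunction ℕ) : ArithmeticFunction ℤ)) m
      = ∑ d ∈ m.divisors, moebius d := by rw [coe_mul_zeta_apply]
  rw [moebius_mul_coe_zeta, one_apply] at h1
  have h2 : ((∑ d ∈ m.divisors, moebius d : ℤ) : ℝ) = ∑ d ∈ m.divisors, (moebius d : ℝ) := by
    push_cast; rfl
  rw [← h2, ← h1]
  split <;> simp

theorem intcase (a d : ℕ) (hd : d ≠ 0) (h : ¬ d ∣ a) : ¬ ∃ m : ℤ, (m : ℝ) = (a : ℝ) / d := by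
  rintro ⟨m, hm⟩
  have hd' : (d : ℝ) ≠ 0 := Nat.cast_ne_zero.mpr hd
  have h1 : (d : ℝ) * m = a := by field_simp at hm; linarith [hm]
  have h2 : (d : ℤ) * m = (a : ℤ) := by exact_mod_cast h1
  exact h (Int.ofNat_dvd.mp (Dvd.intro m h2))

theorem dp_nonint (x : ℝ) (h : ¬ ∃ m : ℤ, (m : ℝ) = x) : dp x = Int.fract x - 1/2 := if_neg h

theorem dp_nat (a : ℕ) : dp ((a:ℝ)/1) = 0 := by
  simp only [dp]; rw [if_pos ⟨a, by push_cast; ring⟩]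

theorem fract_ne (a d : ℕ) (hd : d ≠ 0) (h : ¬ d ∣ a) : Int.fract ((a:ℝ)/d) ≠ 0 := by
  intro h0
  have := Int.self_sub_floor ((a:ℝ)/d)
  rw [h0] at this
  exact intcase a d hd h ⟨⌊(a:ℝ)/d⌋, by linarith⟩

theorem fract_pair (a n d : ℕ) (hdn : d ∣ n) (hd : d ≠ 0) (hda : ¬ d ∣ a) (han : a ≤ n) :
    Int.fract (((n - a : ℕ):ℝ)/d) = 1 - Int.fract ((a:ℝ)/d) := by
  have hd' : (d : ℝ) ≠ 0 := Nat.cast_ne_zero.mpr hd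
  have hc : ((n - a : ℕ):ℝ) = (n:ℝ) - a := by push_cast [han]; ring
  obtain ⟨c, hc2⟩ := hdn
  have : ((n - a : ℕ):ℝ)/d = -((a:ℝ)/d) + (c : ℤ) := by
    rw [hc, hc2]; push_cast; field_simp; ring
  rw [this, Int.fract_add_intCast, Int.fract_neg (fract_ne a d hd hda)]

theorem coprime_mem (n a : ℕ) (hn : 1 < n)
    (ha : a ∈ (range n).filter (fun k => Nat.Coprime k n)) :
    1 ≤ a ∧ a < n ∧ Nat.Coprime a n := by
  simp only [mem_filter, mem_range] at ha
  refine ⟨?_, ha.1, ha.2⟩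
  rcases Nat.eq_zero_or_pos a with h | h
  · subst h; exact absurd (Nat.coprime_zero_left n |>.mp ha.2) (by omega)
  · exact h

theorem not_dvd_of_memU (n a d : ℕ) (hd1 : d ≠ 1) (hdn : d ∣ n) (h3 : Nat.Coprime a n) :
    ¬ d ∣ a := by
  intro hda
  exact hd1 (Nat.dvd_one.mp (h3 ▸ Nat.dvd_gcd hda hdn))

theorem subU_mem (n a : ℕ) (hn : 1 < n) (ha : a ∈ (range n).filter (fun k => Nat.Coprime k n)) :
    n - a ∈ (range n).filter (fun k => Nat.Coprime k n) := by
  obtain ⟨h1, h2, h3⟩ := coprime_mem n a hn ha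
  simp only [mem_filter, mem_range]
  constructor
  · omega
  · have e1 : Nat.gcd (n - a) n = Nat.gcd (n - a) a := by
      have := Nat.gcd_add_self_right (n - a) a
      rwa [show a + (n - a) = n by omega] at this
    have e2 : Nat.gcd (n - a) a = Nat.gcd n a := Nat.gcd_sub_self_left (by omega)
    unfold Nat.Coprime
    rw [e1, e2, Nat.gcd_comm]
    exact h3

theorem pairU (n : ℕ) (hn : 1 < n) (f : ℕ → ℝ) :
    ∑ a ∈ (range n).filter (fun k => Nat.Coprime k n), f a =
    ∑ a ∈ (range n).filter (fun k => Nat.Coprime k n), f (n - a) := by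
  apply Finset.sum_nbij' (fun a => n - a) (fun a => n - a)
  · exact fun a ha => subU_mem n a hn ha
  · exact fun a ha => subU_mem n a hn ha
  · intro a ha; have := coprime_mem n a hn ha; omega
  · intro a ha; have := coprime_mem n a hn ha; omega
  · intro a ha; have := coprime_mem n a hn ha
    congr 1; omega

theorem cardU (n : ℕ) : ((range n).filter (fun k => Nat.Coprime k n)).card = Nat.totient n := by
  rw [Nat.totient]
  congr 1
  apply Finset.filter_congr
  intro x _
  simp [Nat.coprime_comm]

theorem sumU_id (n : ℕ) (hn : 1 < n) :
    ∑ a ∈ (range n).filter (fun k => Nat.Coprime k n), (a : ℝ)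
      = n * Nat.totient n / 2 := by
  have h := pairU n hn (fun a => (a : ℝ))
  have h2 : (2:ℝ) * ∑ a ∈ (range n).filter (fun k => Nat.Coprime k n), (a : ℝ)
      = ∑ a ∈ (range n).filter (fun k => Nat.Coprime k n), ((a : ℝ) + ((n - a : ℕ) : ℝ)) := by
    rw [sum_add_distrib, ← h]; ring
  have h3 : ∑ a ∈ (range n).filter (fun k => Nat.Coprime k n), ((a : ℝ) + ((n - a : ℕ) : ℝ))
      = ∑ a ∈ (range n).filter (fun k => Nat.Coprime k n), (n : ℝ) := by
    apply sum_congr rfl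
    intro a ha
    have := coprime_mem n a hn ha
    push_cast [show a ≤ n by omega]
    ring
  rw [h3, sum_const, nsmul_eq_mul, cardU n] at h2
  linarith

theorem ded_eq (n d1 d2 : ℕ) (hn : 0 < n) (h1 : d1 ∣ n) (h2 : d2 ∣ n)
    (hd1 : d1 ≠ 0) (hd2 : d2 ≠ 0) :
    ded (n / d1) (n / d2)
      = ∑ a ∈ (Icc 1 n).filter (fun a => d2 ∣ a), dp ((a:ℝ)/d1) * dp ((a:ℝ)/n) := by
  have hn' : (n : ℝ) ≠ 0 := Nat.cast_ne_zero.mpr hn.ne'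
  have hd1' : (d1 : ℝ) ≠ 0 := Nat.cast_ne_zero.mpr hd1
  have hd2' : (d2 : ℝ) ≠ 0 := Nat.cast_ne_zero.mpr hd2
  have c1 : ((n / d1 : ℕ) : ℝ) = (n : ℝ) / d1 := Nat.cast_div h1 hd1'
  have c2 : ((n / d2 : ℕ) : ℝ) = (n : ℝ) / d2 := Nat.cast_div h2 hd2'
  unfold ded
  apply Finset.sum_nbij' (fun k => k * d2) (fun a => a / d2)
  · intro k hk
    simp only [mem_Icc, mem_filter] at hk ⊢
    refine ⟨⟨Nat.one_le_iff_ne_zero.mpr (Nat.mul_ne_zero (by omega) hd2), ?_⟩, ⟨k, by ring⟩⟩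
    calc k * d2 ≤ (n / d2) * d2 := Nat.mul_le_mul_right _ hk.2
    _ = n := Nat.div_mul_cancel h2
  · intro a ha
    simp only [mem_Icc, mem_filter] at ha ⊢
    obtain ⟨⟨ha1, ha2⟩, hd⟩ := ha
    exact ⟨(Nat.one_le_div_iff (by omega)).mpr (Nat.le_of_dvd (by omega) hd),
      Nat.div_le_div_right ha2⟩
  · intro k hk
    exact Nat.mul_div_cancel k (by omega)
  · intro a ha
    simp only [mem_Icc, mem_filter] at ha
    exact Nat.div_mul_cancel ha.2
  · intro k hk
    congr 1
    · congr 1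
      rw [c1, c2]
      push_cast
      field_simp
    · congr 1
      rw [c2]
      push_cast
      field_simp

theorem divfilter' (n a : ℕ) (hn : n ≠ 0) :
    n.divisors.filter (fun d => d ∣ a) = (Nat.gcd n a).divisors := by
  have step : n.divisors.filter (fun d => d ∣ a)
      = ((Nat.gcd n a).divisors.filter (fun d => d ∣ a)) := by
    ext d
    simp only [mem_filter, Nat.mem_divisors, Nat.dvd_gcd_iff]
    constructor
    · rintro ⟨⟨hdn, _⟩, hda⟩
      exact ⟨⟨⟨hdn, hda⟩, fun h => hn (Nat.eq_zero_of_gcd_eq_zero_left h)⟩, hda⟩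
    · rintro ⟨⟨⟨hdn, _⟩, _⟩, hda⟩
      exact ⟨⟨hdn, hn⟩, hda⟩
  rw [step]
  apply Finset.filter_true_of_mem
  intro d hd
  exact (Nat.mem_divisors.mp hd).1.trans (Nat.gcd_dvd_right n a)

theorem Ueq (n : ℕ) (hn : 1 < n) :
    (Icc 1 n).filter (fun a => Nat.gcd n a = 1)
      = (range n).filter (fun k => Nat.Coprime k n) := by
  ext a
  simp only [mem_filter, mem_Icc, mem_range, Nat.Coprime]
  constructor
  · rintro ⟨⟨h1, h2⟩, h3⟩
    have : a ≠ n := by rintro rfl; rw [Nat.gcd_self] at h3; omega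
    exact ⟨by omega, by rw [Nat.gcd_comm]; exact h3⟩
  · rintro ⟨h1, h2⟩
    have ha : a ≠ 0 := by rintro rfl; rw [Nat.gcd_zero_left] at h2; omega
    exact ⟨⟨by omega, by omega⟩, by rw [Nat.gcd_comm]; exact h2⟩

theorem innerSumU (n d1 : ℕ) (hn : 1 < n)
    (main : ∀ d2 ∈ n.divisors, ded (n / d1) (n / d2) =
      ∑ a ∈ (Icc 1 n).filter (fun a => d2 ∣ a), dp ((a:ℝ)/d1) * dp ((a:ℝ)/n)) :
    ∑ d2 ∈ n.divisors, (moebius d2 : ℝ) * ded (n/d1) (n/d2)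
      = ∑ a ∈ (range n).filter (fun k => Nat.Coprime k n), dp ((a:ℝ)/d1) * dp ((a:ℝ)/n) := by
  have hn0 : n ≠ 0 := by omega
  calc ∑ d2 ∈ n.divisors, (moebius d2 : ℝ) * ded (n/d1) (n/d2)
      = ∑ d2 ∈ n.divisors, ∑ a ∈ Icc 1 n,
          (if d2 ∣ a then (moebius d2 : ℝ) * (dp ((a:ℝ)/d1) * dp ((a:ℝ)/n)) else 0) := by
        apply sum_congr rfl
        intro d2 hd2
        rw [main d2 hd2, sum_filter, mul_sum]
        apply sum_congr rfl
        intro a _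
        split <;> simp
    _ = ∑ a ∈ Icc 1 n, ∑ d2 ∈ n.divisors,
          (if d2 ∣ a then (moebius d2 : ℝ) * (dp ((a:ℝ)/d1) * dp ((a:ℝ)/n)) else 0) :=
        Finset.sum_comm
    _ = ∑ a ∈ Icc 1 n, (if Nat.gcd n a = 1 then 1 else 0) * (dp ((a:ℝ)/d1) * dp ((a:ℝ)/n)) := by
        apply sum_congr rfl
        intro a _
        rw [← sum_filter, divfilter' n a hn0, ← sum_mul, musum]
    _ = ∑ a ∈ (Icc 1 n).filter (fun a => Nat.gcd n a = 1), dp ((a:ℝ)/d1) * dp ((a:ℝ)/n) := by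
        rw [sum_filter]
        apply sum_congr rfl
        intro a _
        split <;> simp
    _ = ∑ a ∈ (range n).filter (fun k => Nat.Coprime k n), dp ((a:ℝ)/d1) * dp ((a:ℝ)/n) := by
        rw [Ueq n hn]

theorem nu_dp (n a : ℕ) (hn : 1 < n) (h1 : 1 ≤ a) (h3 : Nat.Coprime a n) :
    ∑ d ∈ n.divisors, (moebius d : ℝ) * dp ((a:ℝ)/d)
      = (∑ d ∈ n.divisors, (moebius d : ℝ) * Int.fract ((a:ℝ)/d)) + 1/2 := by
  have hn0 : n ≠ 0 := by omega
  calc ∑ d ∈ n.divisors, (moebius d : ℝ) * dp ((a:ℝ)/d)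
      = ∑ d ∈ n.divisors,
          ((moebius d : ℝ) * (Int.fract ((a:ℝ)/d) - 1/2) + if d = 1 then (1:ℝ)/2 else 0) := by
        apply sum_congr rfl
        intro d hd
        obtain ⟨hdn, hd0⟩ := Nat.mem_divisors.mp hd
        have hd0' : d ≠ 0 := by rintro rfl; exact hn0 (Nat.zero_dvd.mp hdn)
        by_cases hd1 : d = 1
        · subst hd1
          rw [if_pos rfl, Nat.cast_one, dp_nat, div_one, Int.fract_natCast]
          simp [moebius_apply_one]
        · rw [if_neg hd1,
            dp_nonint _ (intcase a d hd0' (not_dvd_of_memU n a d hd1 hdn h3)), add_zero]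
    _ = (∑ d ∈ n.divisors, (moebius d : ℝ) * Int.fract ((a:ℝ)/d)) + 1/2 := by
        rw [sum_add_distrib, Finset.sum_ite_eq' n.divisors 1 (fun _ => (1:ℝ)/2),
          if_pos (Nat.one_mem_divisors.mpr hn0)]
        congr 1
        have : ∑ d ∈ n.divisors, (moebius d : ℝ) * (Int.fract ((a:ℝ)/d) - 1/2)
            = (∑ d ∈ n.divisors, (moebius d : ℝ) * Int.fract ((a:ℝ)/d))
              - (∑ d ∈ n.divisors, (moebius d : ℝ)) * (1/2) := by
          rw [sum_mul, ← sum_sub_distrib]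
          apply sum_congr rfl
          intro d _
          ring
        rw [this, musum, if_neg (by omega)]
        ring

theorem sumU_nu (n : ℕ) (hn : 1 < n) :
    ∑ a ∈ (range n).filter (fun k => Nat.Coprime k n),
        (∑ d ∈ n.divisors, (moebius d : ℝ) * Int.fract ((a:ℝ)/d))
      = -(Nat.totient n : ℝ)/2 := by
  have hn0 : n ≠ 0 := by omega
  rw [Finset.sum_comm]
  have key : ∀ d ∈ n.divisors,
      ∑ a ∈ (range n).filter (fun k => Nat.Coprime k n),
          (moebius d : ℝ) * Int.fract ((a:ℝ)/d)
        = (moebius d : ℝ) * ((Nat.totient n : ℝ)/2) - (if d = 1 then (Nat.totient n : ℝ)/2 else 0) := by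
    intro d hd
    obtain ⟨hdn, _⟩ := Nat.mem_divisors.mp hd
    have hd0' : d ≠ 0 := by rintro rfl; exact hn0 (Nat.zero_dvd.mp hdn)
    rw [← mul_sum]
    by_cases hd1 : d = 1
    · subst hd1
      rw [if_pos rfl]
      have : ∑ a ∈ (range n).filter (fun k => Nat.Coprime k n),
          Int.fract ((a:ℝ)/(1:ℕ)) = 0 := by
        apply Finset.sum_eq_zero
        intro a _
        rw [Nat.cast_one, div_one, Int.fract_natCast]
      rw [this, mul_zero, moebius_apply_one]
      push_cast
      ring
    · rw [if_neg hd1, sub_zero]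
      congr 1
      have hp := pairU n hn (fun a => Int.fract ((a:ℝ)/d))
      have h2 : (2:ℝ) * ∑ a ∈ (range n).filter (fun k => Nat.Coprime k n), Int.fract ((a:ℝ)/d)
          = ∑ a ∈ (range n).filter (fun k => Nat.Coprime k n),
              (Int.fract ((a:ℝ)/d) + Int.fract (((n - a : ℕ):ℝ)/d)) := by
        rw [sum_add_distrib, ← hp]; ring
      have h3 : ∑ a ∈ (range n).filter (fun k => Nat.Coprime k n),
              (Int.fract ((a:ℝ)/d) + Int.fract (((n - a : ℕ):ℝ)/d))
          = ∑ a ∈ (range n).filter (fun k => Nat.Coprime k n), (1:ℝ) := by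
        apply sum_congr rfl
        intro a ha
        obtain ⟨ha1, ha2, ha3⟩ := coprime_mem n a hn ha
        rw [fract_pair a n d hdn hd0' (not_dvd_of_memU n a d hd1 hdn ha3) (by omega)]
        ring
      rw [h3, sum_const, nsmul_eq_mul, mul_one, cardU n] at h2
      linarith
  rw [Finset.sum_congr rfl key, sum_sub_distrib, ← sum_mul, musum, if_neg (by omega),
    Finset.sum_ite_eq' n.divisors 1 (fun _ => (Nat.totient n : ℝ)/2),
    if_pos (Nat.one_mem_divisors.mpr hn0)]
  ring

theorem dp_div_n (n a : ℕ) (hn : 1 < n) (h1 : 1 ≤ a) (h2 : a < n) :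
    dp ((a:ℝ)/n) = (a:ℝ)/n - 1/2 := by
  have hnd : ¬ n ∣ a := fun h => by have := Nat.le_of_dvd (by omega) h; omega
  rw [dp_nonint _ (intcase a n (by omega) hnd)]
  congr 1
  rw [Int.fract_eq_self.mpr]
  constructor
  · positivity
  · rw [div_lt_one (by positivity)]
    exact_mod_cast h2

end Helpers

theorem sum_nu_mul (n : ℕ) (hn : 1 < n) :
    ∑ a ∈ (Finset.range n).filter (fun k => Nat.Coprime k n),
        (∑ d ∈ n.divisors, (moebius d : ℝ) * Int.fract ((a : ℝ) / d)) * (a : ℝ) =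
      -(n : ℝ) * (Nat.totient n : ℝ) / 4 +
        (n : ℝ) * ∑ d₁ ∈ n.divisors, ∑ d₂ ∈ n.divisors,
          (moebius d₁ : ℝ) * (moebius d₂ : ℝ) * ded (n / d₁) (n / d₂) := by
  have hn0 : n ≠ 0 := by omega
  have hnR : (n : ℝ) ≠ 0 := Nat.cast_ne_zero.mpr hn0
  set U := (Finset.range n).filter (fun k => Nat.Coprime k n) with hU
  set ν : ℕ → ℝ := fun a => ∑ d ∈ n.divisors, (moebius d : ℝ) * Int.fract ((a : ℝ) / d) with hν
  -- Step 1: rewrite the double Dedekind sum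
  have step1 : ∑ d₁ ∈ n.divisors, ∑ d₂ ∈ n.divisors,
        (moebius d₁ : ℝ) * (moebius d₂ : ℝ) * ded (n / d₁) (n / d₂)
      = ∑ a ∈ U, (ν a + 1/2) * ((a:ℝ)/n - 1/2) := by
    have e1 : ∀ d₁ ∈ n.divisors, ∑ d₂ ∈ n.divisors,
        (moebius d₁ : ℝ) * (moebius d₂ : ℝ) * ded (n / d₁) (n / d₂)
        = (moebius d₁ : ℝ) * ∑ a ∈ U, dp ((a:ℝ)/d₁) * dp ((a:ℝ)/n) := by
      intro d₁ hd₁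
      obtain ⟨hd1n, _⟩ := Nat.mem_divisors.mp hd₁
      have : ∑ d₂ ∈ n.divisors, (moebius d₁ : ℝ) * (moebius d₂ : ℝ) * ded (n / d₁) (n / d₂)
          = (moebius d₁ : ℝ) * ∑ d₂ ∈ n.divisors, (moebius d₂ : ℝ) * ded (n / d₁) (n / d₂) := by
        rw [mul_sum]
        apply sum_congr rfl
        intro d₂ _
        ring
      rw [this, innerSumU n d₁ hn]
      intro d₂ hd₂
      obtain ⟨hd2n, _⟩ := Nat.mem_divisors.mp hd₂
      exact ded_eq n d₁ d₂ (by omega) hd1n hd2n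
        (fun h => hn0 (Nat.zero_dvd.mp (h ▸ hd1n)))
        (fun h => hn0 (Nat.zero_dvd.mp (h ▸ hd2n)))
    rw [Finset.sum_congr rfl e1]
    calc ∑ d₁ ∈ n.divisors, (moebius d₁ : ℝ) * ∑ a ∈ U, dp ((a:ℝ)/d₁) * dp ((a:ℝ)/n)
        = ∑ d₁ ∈ n.divisors, ∑ a ∈ U, (moebius d₁ : ℝ) * (dp ((a:ℝ)/d₁) * dp ((a:ℝ)/n)) := by
          apply sum_congr rfl; intro d₁ _; rw [mul_sum]
      _ = ∑ a ∈ U, ∑ d₁ ∈ n.divisors, (moebius d₁ : ℝ) * (dp ((a:ℝ)/d₁) * dp ((a:ℝ)/n)) :=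
          Finset.sum_comm
      _ = ∑ a ∈ U, (ν a + 1/2) * ((a:ℝ)/n - 1/2) := by
          apply sum_congr rfl
          intro a ha
          obtain ⟨ha1, ha2, ha3⟩ := coprime_mem n a hn ha
          have : ∑ d₁ ∈ n.divisors, (moebius d₁ : ℝ) * (dp ((a:ℝ)/d₁) * dp ((a:ℝ)/n))
              = (∑ d₁ ∈ n.divisors, (moebius d₁ : ℝ) * dp ((a:ℝ)/d₁)) * dp ((a:ℝ)/n) := by
            rw [sum_mul]
            apply sum_congr rfl
            intro d₁ _
            ring
          rw [this, nu_dp n a hn ha1 ha3, dp_div_n n a hn ha1 ha2]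
  -- Step 2: expand and conclude
  have hB : ∑ a ∈ U, ν a = -(Nat.totient n : ℝ)/2 := sumU_nu n hn
  have hC : ∑ a ∈ U, (a:ℝ) = n * Nat.totient n / 2 := sumU_id n hn
  have hD : (U.card : ℝ) = (Nat.totient n : ℝ) := by exact_mod_cast congrArg Nat.cast (cardU n)
  rw [step1]
  have expand : (n:ℝ) * ∑ a ∈ U, (ν a + 1/2) * ((a:ℝ)/n - 1/2)
      = (∑ a ∈ U, ν a * a) - ((n:ℝ)/2) * (∑ a ∈ U, ν a)
        + (1/2) * (∑ a ∈ U, (a:ℝ)) - (U.card : ℝ) * ((n:ℝ)/4) := by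
    rw [mul_sum]
    have e : ∀ a ∈ U, (n:ℝ) * ((ν a + 1/2) * ((a:ℝ)/n - 1/2))
        = (ν a * a - ((n:ℝ)/2) * ν a) + ((1/2) * (a:ℝ) - (n:ℝ)/4) := by
      intro a _
      field_simp
      ring
    rw [Finset.sum_congr rfl e, sum_add_distrib, sum_sub_distrib, sum_sub_distrib,
      ← mul_sum, ← mul_sum, sum_const, nsmul_eq_mul]
    ring
  rw [expand, hB, hC, hD]
  rw [show (∑ a ∈ U, (∑ d ∈ n.divisors, (moebius d : ℝ) * Int.fract ((a : ℝ) / d)) * (a : ℝ)) = ∑ a ∈ U, ν a * a from rfl]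
  field_simp
  ring
end
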